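/- Let L ∈ ℝ^{n×n} be symmetric positive semidefinite, M > 0, D > 0, and set A = [[0_n, I_n], [−(1/M)L, −(D/M)I_n]], F = [0_n; (1/M)I_n], C = [0_n, I_n]. Then the symmetric matrix P = [[(1/(2D))L, 0_n], [0_n, (M/(2D))I_n]] satisfies the Lyapunov equation P·A + Aᵀ·P = −CᵀC, and trace(Fᵀ P F) = n/(2DM). (Thus the H₂ norm of the swing dynamics with frequency output is √(n/(2DM)), a decreasing function of both inertia and damping, independent of the network topology.) -/

import Mathlib

open Matrix

/-- The swing-dynamics state matrix `A = [[0, I], [−(1/M)L, −(D/M)I]]`. -/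
noncomputable def swingA (n : ℕ) (M D : ℝ) (L : Matrix (Fin n) (Fin n) ℝ) :
    Matrix (Fin n ⊕ Fin n) (Fin n ⊕ Fin n) ℝ :=
  Matrix.fromBlocks 0 1 (-(1 / M) • L) (-(D / M) • 1)

/-- The swing-dynamics input matrix `F = [0; (1/M)I]`. -/
noncomputable def swingF (n : ℕ) (M : ℝ) : Matrix (Fin n ⊕ Fin n) (Fin n) ℝ :=
  Matrix.fromRows 0 ((1 / M) • 1)

/-- The frequency output matrix `C = [0, I]`. -/
def swingCfreq (n : ℕ) : Matrix (Fin n) (Fin n ⊕ Fin n) ℝ :=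
  Matrix.fromCols 0 1

/-- The candidate observability Gramian
`P = [[(1/(2D))L, 0], [0, (M/(2D))I]]`. -/
noncomputable def swingPfreq (n : ℕ) (M D : ℝ)
    (L : Matrix (Fin n) (Fin n) ℝ) :
    Matrix (Fin n ⊕ Fin n) (Fin n ⊕ Fin n) ℝ :=
  Matrix.fromBlocks ((1 / (2 * D)) • L) 0 0 ((M / (2 * D)) • 1)

/-- Observability Gramian computation for the swing dynamics with frequency
output: `P` satisfies the Lyapunov equation `PA + AᵀP = −CᵀC` and
`trace(FᵀPF) = n/(2DM)`.  Hence the H₂ norm with frequency output is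
`√(n/(2DM))`, a decreasing function of both inertia and damping, independent
of the network topology. -/
theorem swing_freq_H2_gramian (n : ℕ) (M D : ℝ) (hM : 0 < M) (hD : 0 < D)
    (L : Matrix (Fin n) (Fin n) ℝ) (hL : L.PosSemidef) :
    swingPfreq n M D L * swingA n M D L + (swingA n M D L)ᵀ * swingPfreq n M D L =
      -((swingCfreq n)ᵀ * swingCfreq n) ∧
    ((swingF n M)ᵀ * swingPfreq n M D L * swingF n M).trace = n / (2 * D * M) := by
  have hsym : Lᵀ = L := hL.1.eq
  constructor
  · simp only [swingPfreq, swingA, swingCfreq, Matrix.fromBlocks_multiply,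
      Matrix.fromBlocks_transpose, Matrix.transpose_fromCols,
      Matrix.fromRows_mul_fromCols, Matrix.fromBlocks_add,
      Matrix.transpose_smul, Matrix.transpose_neg, Matrix.transpose_one,
      Matrix.transpose_zero, hsym, Matrix.fromBlocks_neg,
      Matrix.smul_mul, Matrix.mul_smul, smul_smul, Matrix.zero_mul,
      Matrix.mul_zero, Matrix.mul_one, Matrix.one_mul, Matrix.neg_mul,
      Matrix.mul_neg, smul_neg, neg_smul, add_zero, zero_add, smul_zero,
      neg_zero, mul_one, one_mul]
    have hM' : M ≠ 0 := hM.ne'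
    have hD' : D ≠ 0 := hD.ne'
    rw [show M/(2*D)*(1/M) = 1/(2*D) by field_simp; try ring,
        show (1/M)*(M/(2*D)) = 1/(2*D) by field_simp; try ring,
        show D/M*(M/(2*D)) = (1/2:ℝ) by field_simp; try ring,
        show M/(2*D)*(D/M) = (1/2:ℝ) by field_simp; try ring]
    rw [show -((1/2:ℝ) • (1 : Matrix (Fin n) (Fin n) ℝ)) + -((1/2:ℝ) • 1) = -1 by module,
        add_neg_cancel, neg_add_cancel]
  · have hM' : M ≠ 0 := hM.ne'
    have hD' : (2*D) ≠ 0 := by positivity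
    simp only [swingF, swingPfreq, Matrix.transpose_fromRows,
      Matrix.fromCols_mul_fromBlocks, Matrix.fromCols_mul_fromRows,
      Matrix.transpose_smul, Matrix.transpose_zero, Matrix.transpose_one,
      Matrix.smul_mul, Matrix.mul_smul, smul_smul, Matrix.zero_mul,
      Matrix.mul_zero, Matrix.mul_one, Matrix.one_mul, smul_zero, add_zero,
      zero_add, Matrix.trace_smul, Matrix.trace_one, smul_eq_mul]
    simp [Finset.card_univ]
    field_simp
    try ring
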